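/- Suppose ∫₀^∞ s d|κ|(s) < ∞, and suppose K ∈ L²(0,∞) with β²∫₀^∞ K(s)² ds < 1 where β ≠ 0, σ ≠ 0. Then the function γ : [0,∞) → ℝ defined by γ(Δ) = β² · (σ²/(1 − β²∫₀^∞ K(s)² ds)) · ∫₀^∞ K(s)K(s+Δ) ds is well defined and satisfies ∫₀^∞ |γ(Δ)| dΔ < ∞. -/

import Mathlib

open MeasureTheory Filter Set

open scoped ENNReal


lemma sm_apply (s : SignedMeasure ℝ) {A : Set ℝ} (hA : MeasurableSet A) :
    s A = (s.toJordanDecomposition.posPart A).toReal -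
      (s.toJordanDecomposition.negPart A).toReal := by
  conv_lhs => rw [← s.toSignedMeasure_toJordanDecomposition]
  rw [JordanDecomposition.toSignedMeasure, VectorMeasure.sub_apply,
    Measure.toSignedMeasure_apply_measurable hA, Measure.toSignedMeasure_apply_measurable hA]
  rfl

lemma sm_abs_le (s : SignedMeasure ℝ) {A : Set ℝ} (hA : MeasurableSet A) :
    |s A| ≤ (s.totalVariation A).toReal := by
  rw [sm_apply s hA, SignedMeasure.totalVariation, Measure.add_apply,
    ENNReal.toReal_add (measure_ne_top _ _) (measure_ne_top _ _)]
  have h1 : (0:ℝ) ≤ (s.toJordanDecomposition.posPart A).toReal := ENNReal.toReal_nonneg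
  have h2 : (0:ℝ) ≤ (s.toJordanDecomposition.negPart A).toReal := ENNReal.toReal_nonneg
  rw [abs_sub_le_iff]; constructor <;> linarith

lemma shift_lintegral (g : ℝ → ℝ≥0∞) (a c : ℝ) :
    ∫⁻ x in Ioi a, g (x + c) = ∫⁻ x in Ioi (a + c), g x := by
  have h : ∀ x : ℝ, (Ioi a).indicator (fun y => g (y + c)) x
      = (Ioi (a + c)).indicator g (x + c) := by
    intro x
    by_cases hx : x ∈ Ioi a
    · rw [indicator_of_mem hx, indicator_of_mem (by simpa using add_lt_add_right (mem_Ioi.1 hx) c)]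
    · rw [indicator_of_notMem hx, indicator_of_notMem (by
        simp only [mem_Ioi] at hx ⊢; intro h; exact hx (by linarith))]
  calc ∫⁻ x in Ioi a, g (x + c)
      = ∫⁻ x, (Ioi a).indicator (fun y => g (y + c)) x := (lintegral_indicator measurableSet_Ioi _).symm
    _ = ∫⁻ x, (Ioi (a + c)).indicator g (x + c) := by simp_rw [h]
    _ = ∫⁻ x, (Ioi (a + c)).indicator g x := lintegral_add_right_eq_self _ c
    _ = ∫⁻ x in Ioi (a + c), g x := lintegral_indicator measurableSet_Ioi _

/-- Theorem 5.3(a) (short memory): if the signed measure `κ` has finite first moment,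
`K ∈ L²(0,∞)` and `β² ∫₀^∞ K² < 1`, then the limiting autocovariance function
`γ(Δ) = β² (σ²/(1−β²∫₀^∞K²)) ∫₀^∞ K(s)K(s+Δ) ds` is well defined and
`∫₀^∞ |γ(Δ)| dΔ < ∞`. Here `K(x) = −λ([−τ, −(x∧τ)]) + κ([x,∞))`. -/
theorem blackScholesLongMemory_short_memory
    (σ β τ : ℝ) (hσ : σ ≠ 0) (hβ : β ≠ 0) (hτ : 0 < τ)
    (lam : SignedMeasure ℝ) (kap : SignedMeasure ℝ)
    (hlam_supp : lam.totalVariation (Icc (-τ) 0)ᶜ = 0)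
    (hkap_supp : kap.totalVariation (Ici 0)ᶜ = 0)
    (hbal : kap (Ici 0) = lam (Icc (-τ) 0))
    (K : ℝ → ℝ)
    (hK : ∀ x ≥ (0:ℝ), K x = -(lam (Icc (-τ) (-(min x τ)))) + kap (Ici x))
    (hmom : ∫⁻ s in Ici (0:ℝ), ENNReal.ofReal s ∂kap.totalVariation < ⊤)
    (hKL2 : IntegrableOn (fun s => K s ^ 2) (Ioi 0))
    (hsmall : β ^ 2 * ∫ s in Ioi (0:ℝ), K s ^ 2 < 1) :
    (∀ Δ ≥ (0:ℝ), IntegrableOn (fun s => K s * K (s + Δ)) (Ioi 0)) ∧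
      ∫⁻ Δ in Ioi (0:ℝ),
        ENNReal.ofReal |β ^ 2 * (σ ^ 2 / (1 - β ^ 2 * ∫ s in Ioi (0:ℝ), K s ^ 2)) *
          ∫ s in Ioi (0:ℝ), K s * K (s + Δ)| < ⊤ := by
  haveI : IsFiniteMeasure lam.totalVariation :=
    inferInstanceAs (IsFiniteMeasure (lam.toJordanDecomposition.posPart + lam.toJordanDecomposition.negPart))
  haveI : IsFiniteMeasure kap.totalVariation :=
    inferInstanceAs (IsFiniteMeasure (kap.toJordanDecomposition.posPart + kap.toJordanDecomposition.negPart))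
  -- measurable version of K
  set P := lam.toJordanDecomposition.posPart with hP
  set N := lam.toJordanDecomposition.negPart with hN
  set Pk := kap.toJordanDecomposition.posPart with hPk
  set Nk := kap.toJordanDecomposition.negPart with hNk
  set K' : ℝ → ℝ := fun x =>
    -((P (Icc (-τ) (-(min x τ)))).toReal - (N (Icc (-τ) (-(min x τ)))).toReal)
      + ((Pk (Ici x)).toReal - (Nk (Ici x)).toReal) with hK'def
  have hK'eq : ∀ x : ℝ, K' x = -(lam (Icc (-τ) (-(min x τ)))) + kap (Ici x) := by
    intro x
    rw [hK'def, sm_apply lam measurableSet_Icc, sm_apply kap measurableSet_Ici]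
  have hKK' : ∀ x : ℝ, 0 ≤ x → K x = K' x := fun x hx => (hK x hx).trans (hK'eq x).symm
  have hanti : ∀ x y : ℝ, x ≤ y → Icc (-τ) (-(min y τ)) ⊆ Icc (-τ) (-(min x τ)) :=
    fun x y hxy => Icc_subset_Icc le_rfl (neg_le_neg (min_le_min hxy le_rfl))
  have hmeasP : Measurable fun x => (P (Icc (-τ) (-(min x τ)))).toReal :=
    Antitone.measurable (fun x y hxy =>
      ENNReal.toReal_mono (measure_ne_top _ _) (measure_mono (hanti x y hxy)))
  have hmeasN : Measurable fun x => (N (Icc (-τ) (-(min x τ)))).toReal :=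
    Antitone.measurable (fun x y hxy =>
      ENNReal.toReal_mono (measure_ne_top _ _) (measure_mono (hanti x y hxy)))
  have hmeasPk : Measurable fun x => (Pk (Ici x)).toReal :=
    Antitone.measurable (fun x y hxy =>
      ENNReal.toReal_mono (measure_ne_top _ _) (measure_mono (Ici_subset_Ici.2 hxy)))
  have hmeasNk : Measurable fun x => (Nk (Ici x)).toReal :=
    Antitone.measurable (fun x y hxy =>
      ENNReal.toReal_mono (measure_ne_top _ _) (measure_mono (Ici_subset_Ici.2 hxy)))
  have hK'meas : Measurable K' := ((hmeasP.sub hmeasN).neg).add (hmeasPk.sub hmeasNk)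
  -- global bound
  set B : ℝ := (lam.totalVariation univ).toReal + (kap.totalVariation univ).toReal with hBdef
  have hK'bd : ∀ x : ℝ, |K' x| ≤ B := by
    intro x
    have h1 : |lam (Icc (-τ) (-(min x τ)))| ≤ (lam.totalVariation univ).toReal :=
      le_trans (sm_abs_le lam measurableSet_Icc)
        (ENNReal.toReal_mono (measure_ne_top _ _) (measure_mono (subset_univ _)))
    have h2 : |kap (Ici x)| ≤ (kap.totalVariation univ).toReal :=
      le_trans (sm_abs_le kap measurableSet_Ici)
        (ENNReal.toReal_mono (measure_ne_top _ _) (measure_mono (subset_univ _)))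
    rw [hK'eq x]
    calc |-(lam (Icc (-τ) (-(min x τ)))) + kap (Ici x)|
        ≤ |-(lam (Icc (-τ) (-(min x τ))))| + |kap (Ici x)| := abs_add_le _ _
      _ ≤ B := by rw [abs_neg]; exact add_le_add h1 h2
  -- the atom at -τ vanishes
  have hc : lam (Icc (-τ) (-τ)) = 0 := by
    by_contra hc
    set c := lam (Icc (-τ) (-τ)) with hcdef
    have hcpos : 0 < |c| / 2 := by
      have := abs_pos.2 hc; linarith
    have hiInter : (⋂ n : ℕ, Ici ((n : ℝ))) = ∅ := by
      ext x
      simp only [mem_iInter, mem_Ici, mem_empty_iff_false, iff_false]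
      push_neg
      obtain ⟨n, hn⟩ := exists_nat_gt x
      exact ⟨n, hn⟩
    have htail : Tendsto (fun n : ℕ => kap.totalVariation (Ici ((n : ℝ)))) atTop (nhds 0) := by
      have := tendsto_measure_iInter_atTop (μ := kap.totalVariation)
        (s := fun n : ℕ => Ici ((n : ℝ)))
        (fun n => measurableSet_Ici.nullMeasurableSet)
        (fun m n h => Ici_subset_Ici.2 (Nat.cast_le.2 h))
        ⟨0, measure_ne_top _ _⟩
      rwa [hiInter, measure_empty] at this
    obtain ⟨n, hn⟩ := (htail.eventually_lt_const (ENNReal.ofReal_pos.2 hcpos)).exists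
    set M : ℝ := max τ (n : ℝ) with hMdef
    have hfin : ∫⁻ x in Ioi M, (‖K x ^ 2‖₊ : ℝ≥0∞) < ⊤ :=
      (hKL2.mono_set (Ioi_subset_Ioi (le_trans hτ.le (le_max_left _ _)))).2
    have hlow : ∀ x ∈ Ioi M, ENNReal.ofReal ((|c| / 2) ^ 2) ≤ (‖K x ^ 2‖₊ : ℝ≥0∞) := by
      intro x hx
      have hxM : M < x := hx
      have hxτ : τ ≤ x := le_trans (le_max_left _ _) hxM.le
      have hxn : (n : ℝ) ≤ x := le_trans (le_max_right _ _) hxM.le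
      have hx0 : (0:ℝ) ≤ x := le_trans hτ.le hxτ
      have hKx : K x = -c + kap (Ici x) := by
        rw [hK x hx0, min_eq_right hxτ, hcdef]
      have habs : |kap (Ici x)| ≤ |c| / 2 := by
        refine le_trans (sm_abs_le kap measurableSet_Ici) ?_
        have hle : kap.totalVariation (Ici x) ≤ kap.totalVariation (Ici ((n:ℝ))) :=
          measure_mono (Ici_subset_Ici.2 hxn)
        exact (ENNReal.toReal_lt_of_lt_ofReal (lt_of_le_of_lt hle hn)).le
      have hKlow : |c| / 2 ≤ |K x| := by
        rw [hKx]
        have := abs_abs_sub_abs_le_abs_sub (-c) (kap (Ici x))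
        have h2 : |c| - |kap (Ici x)| ≤ |-c + kap (Ici x)| := by
          have := abs_sub_abs_le_abs_sub (-c) (-(kap (Ici x)))
          simp only [abs_neg, sub_neg_eq_add] at this
          linarith
        linarith
      rw [← enorm_eq_nnnorm, Real.enorm_eq_ofReal_abs]
      apply ENNReal.ofReal_le_ofReal
      rw [abs_of_nonneg (sq_nonneg (K x))]
      calc (|c| / 2) ^ 2 ≤ |K x| ^ 2 := by
            apply pow_le_pow_left₀ hcpos.le hKlow
        _ = K x ^ 2 := sq_abs _
    have : (⊤ : ℝ≥0∞) ≤ ∫⁻ x in Ioi M, (‖K x ^ 2‖₊ : ℝ≥0∞) := by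
      have h1 : ∫⁻ x in Ioi M, ENNReal.ofReal ((|c| / 2) ^ 2)
          ≤ ∫⁻ x in Ioi M, (‖K x ^ 2‖₊ : ℝ≥0∞) :=
        lintegral_mono_ae ((ae_restrict_iff' measurableSet_Ioi).2 (ae_of_all _ hlow))
      rw [setLIntegral_const, Real.volume_Ioi,
        ENNReal.mul_top (ne_of_gt (ENNReal.ofReal_pos.2 (by positivity)))] at h1
      exact h1
    exact absurd hfin (not_lt.2 this)
  -- L² finiteness for K'
  have hL2' : ∫⁻ x in Ioi (0:ℝ), ENNReal.ofReal (K' x ^ 2) < ⊤ := by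
    have hcongr : ∫⁻ x in Ioi (0:ℝ), ENNReal.ofReal (K' x ^ 2)
        = ∫⁻ x in Ioi (0:ℝ), (‖K x ^ 2‖₊ : ℝ≥0∞) := by
      refine setLIntegral_congr_fun measurableSet_Ioi (fun x hx => ?_)
      rw [← enorm_eq_nnnorm, Real.enorm_eq_ofReal_abs, abs_of_nonneg (sq_nonneg _), hKK' x (le_of_lt hx)]
    rw [hcongr]
    exact hKL2.2
  -- L¹ finiteness for K'
  have hLC : ∫⁻ x in Ioi (0:ℝ), kap.totalVariation (Ici x) ∂volume
      = ∫⁻ s, ENNReal.ofReal s ∂kap.totalVariation := by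
    have hswap : ∫⁻ x in Ioi (0:ℝ), ∫⁻ s, (Iic s).indicator (1 : ℝ → ℝ≥0∞) x ∂kap.totalVariation ∂volume
        = ∫⁻ s, ∫⁻ x in Ioi (0:ℝ), (Iic s).indicator (1 : ℝ → ℝ≥0∞) x ∂volume ∂kap.totalVariation := by
      apply lintegral_lintegral_swap
      have hset : MeasurableSet {p : ℝ × ℝ | p.1 ≤ p.2} := measurableSet_le measurable_fst measurable_snd
      have : (Function.uncurry fun x s => (Iic s).indicator (1 : ℝ → ℝ≥0∞) x)
          = {p : ℝ × ℝ | p.1 ≤ p.2}.indicator (fun _ => (1:ℝ≥0∞)) := by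
        funext p
        by_cases hp : p.1 ≤ p.2 <;>
          simp [Function.uncurry, indicator, hp]
      rw [this]
      exact ((measurable_const.indicator hset)).aemeasurable
    calc ∫⁻ x in Ioi (0:ℝ), kap.totalVariation (Ici x) ∂volume
        = ∫⁻ x in Ioi (0:ℝ), ∫⁻ s, (Iic s).indicator (1 : ℝ → ℝ≥0∞) x ∂kap.totalVariation ∂volume := by
          refine setLIntegral_congr_fun measurableSet_Ioi (fun x hx => ?_)
          have : ∀ s : ℝ, (Iic s).indicator (1 : ℝ → ℝ≥0∞) x = (Ici x).indicator (1 : ℝ → ℝ≥0∞) s := by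
            intro s
            by_cases h : x ≤ s <;> simp [indicator, h]
          simp_rw [this]
          rw [lintegral_indicator_one measurableSet_Ici]
      _ = ∫⁻ s, ∫⁻ x in Ioi (0:ℝ), (Iic s).indicator (1 : ℝ → ℝ≥0∞) x ∂volume ∂kap.totalVariation := hswap
      _ = ∫⁻ s, ENNReal.ofReal s ∂kap.totalVariation := by
          refine lintegral_congr fun s => ?_
          rw [lintegral_indicator_one measurableSet_Iic, Measure.restrict_apply measurableSet_Iic,
            inter_comm, Ioi_inter_Iic, Real.volume_Ioc, sub_zero]
  have hmom' : ∫⁻ s, ENNReal.ofReal s ∂kap.totalVariation < ⊤ := by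
    rw [← lintegral_add_compl (fun s => ENNReal.ofReal s) measurableSet_Ici (μ := kap.totalVariation)]
    have h2 : ∫⁻ s in (Ici (0:ℝ))ᶜ, ENNReal.ofReal s ∂kap.totalVariation = 0 := by
      rw [setLIntegral_measure_zero _ _ hkap_supp]
    rw [h2, add_zero]
    exact hmom
  have hL1 : ∫⁻ x in Ioi (0:ℝ), ENNReal.ofReal |K' x| < ⊤ := by
    have hsplit : Ioi (0:ℝ) = Ioc 0 τ ∪ Ioi τ := (Ioc_union_Ioi_eq_Ioi hτ.le).symm
    rw [hsplit]
    refine lt_of_le_of_lt (lintegral_union_le _ _ _) ?_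
    have hbdd : ∫⁻ x in Ioc (0:ℝ) τ, ENNReal.ofReal |K' x| < ⊤ := by
      refine lt_of_le_of_lt (lintegral_mono fun x => ENNReal.ofReal_le_ofReal (hK'bd x)) ?_
      rw [setLIntegral_const, Real.volume_Ioc]
      exact ENNReal.mul_lt_top ENNReal.ofReal_lt_top ENNReal.ofReal_lt_top
    have htail : ∫⁻ x in Ioi τ, ENNReal.ofReal |K' x| < ⊤ := by
      have hb : ∀ x ∈ Ioi τ, ENNReal.ofReal |K' x| ≤ kap.totalVariation (Ici x) := by
        intro x hx
        have hxτ : τ ≤ x := (mem_Ioi.1 hx).le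
        have hKx : K' x = kap (Ici x) := by
          rw [hK'eq x, min_eq_right hxτ, hc, neg_zero, zero_add]
        rw [hKx]
        refine le_trans (ENNReal.ofReal_le_ofReal (sm_abs_le kap measurableSet_Ici)) ?_
        rw [ENNReal.ofReal_toReal (measure_ne_top _ _)]
      refine lt_of_le_of_lt (lintegral_mono_ae
        ((ae_restrict_iff' measurableSet_Ioi).2 (ae_of_all _ hb))) ?_
      refine lt_of_le_of_lt (lintegral_mono_set (Ioi_subset_Ioi hτ.le)) ?_
      rw [hLC]
      exact hmom'
    exact ENNReal.add_lt_top.2 ⟨hbdd, htail⟩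
  -- part 1
  have part1 : ∀ Δ ≥ (0:ℝ), IntegrableOn (fun s => K s * K (s + Δ)) (Ioi 0) := by
    intro Δ hΔ
    have heq : EqOn (fun s => K s * K (s + Δ)) (fun s => K' s * K' (s + Δ)) (Ioi 0) := by
      intro s hs
      have hs0 : (0:ℝ) < s := hs
      simp only
      rw [hKK' s hs0.le, hKK' (s + Δ) (by linarith)]
    constructor
    · exact AEStronglyMeasurable.congr
        ((hK'meas.mul (hK'meas.comp (measurable_id.add_const Δ))).aestronglyMeasurable)
        (heq.symm.eventuallyEq_of_mem (self_mem_ae_restrict measurableSet_Ioi))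
    · rw [HasFiniteIntegral]
      have hcongr : ∫⁻ s in Ioi (0:ℝ), (‖K s * K (s + Δ)‖₊ : ℝ≥0∞)
          = ∫⁻ s in Ioi (0:ℝ), ENNReal.ofReal |K' s * K' (s + Δ)| := by
        refine setLIntegral_congr_fun measurableSet_Ioi (fun s hs => ?_)
        have hs0 : (0:ℝ) < s := hs
        rw [← enorm_eq_nnnorm, Real.enorm_eq_ofReal_abs, hKK' s hs0.le, hKK' (s + Δ) (by linarith)]
      rw [show (∫⁻ a in Ioi (0:ℝ), ‖K a * K (a + Δ)‖ₑ) = _ from hcongr]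
      have hbound : ∀ s : ℝ, ENNReal.ofReal |K' s * K' (s + Δ)|
          ≤ ENNReal.ofReal (K' s ^ 2) + ENNReal.ofReal (K' (s + Δ) ^ 2) := by
        intro s
        rw [← ENNReal.ofReal_add (sq_nonneg _) (sq_nonneg _)]
        apply ENNReal.ofReal_le_ofReal
        rw [abs_mul]
        nlinarith [sq_nonneg (|K' s| - |K' (s + Δ)|), sq_abs (K' s), sq_abs (K' (s + Δ)),
          abs_nonneg (K' s), abs_nonneg (K' (s + Δ))]
      refine lt_of_le_of_lt (lintegral_mono hbound) ?_
      rw [lintegral_add_left ((hK'meas.pow_const 2).ennreal_ofReal)]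
      have hshift : ∫⁻ s in Ioi (0:ℝ), ENNReal.ofReal (K' (s + Δ) ^ 2)
          = ∫⁻ s in Ioi ((0:ℝ) + Δ), ENNReal.ofReal (K' s ^ 2) :=
        shift_lintegral (fun x => ENNReal.ofReal (K' x ^ 2)) 0 Δ
      rw [hshift]
      refine ENNReal.add_lt_top.2 ⟨hL2', lt_of_le_of_lt (lintegral_mono_set ?_) hL2'⟩
      exact Ioi_subset_Ioi (by linarith)
  refine ⟨part1, ?_⟩
  -- part 2
  set C : ℝ := β ^ 2 * (σ ^ 2 / (1 - β ^ 2 * ∫ s in Ioi (0:ℝ), K s ^ 2)) with hCdef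
  set L1 : ℝ≥0∞ := ∫⁻ x in Ioi (0:ℝ), ENNReal.ofReal |K' x| with hL1def
  have key : ∀ Δ ∈ Ioi (0:ℝ), ENNReal.ofReal |C * ∫ s in Ioi (0:ℝ), K s * K (s + Δ)|
      ≤ ENNReal.ofReal |C| *
        ∫⁻ s in Ioi (0:ℝ), ENNReal.ofReal |K' s| * ENNReal.ofReal |K' (s + Δ)| := by
    intro Δ hΔ
    have hΔ0 : (0:ℝ) < Δ := hΔ
    rw [abs_mul, ENNReal.ofReal_mul (abs_nonneg _)]
    refine mul_le_mul_right ?_ _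
    calc ENNReal.ofReal |∫ s in Ioi (0:ℝ), K s * K (s + Δ)|
        = (‖∫ s in Ioi (0:ℝ), K s * K (s + Δ)‖₊ : ℝ≥0∞) := (Real.enorm_eq_ofReal_abs _).symm
      _ ≤ ∫⁻ s in Ioi (0:ℝ), (‖K s * K (s + Δ)‖₊ : ℝ≥0∞) := enorm_integral_le_lintegral_enorm _
      _ = ∫⁻ s in Ioi (0:ℝ), ENNReal.ofReal |K' s| * ENNReal.ofReal |K' (s + Δ)| := by
          refine setLIntegral_congr_fun measurableSet_Ioi (fun s hs => ?_)
          have hs0 : (0:ℝ) < s := hs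
          rw [← enorm_eq_nnnorm, Real.enorm_eq_ofReal_abs, hKK' s hs0.le, hKK' (s + Δ) (by linarith),
            abs_mul, ENNReal.ofReal_mul (abs_nonneg _)]
  have hswap2 : ∫⁻ Δ in Ioi (0:ℝ), ∫⁻ s in Ioi (0:ℝ),
        ENNReal.ofReal |K' s| * ENNReal.ofReal |K' (s + Δ)| ∂volume ∂volume
      = ∫⁻ s in Ioi (0:ℝ), ∫⁻ Δ in Ioi (0:ℝ),
        ENNReal.ofReal |K' s| * ENNReal.ofReal |K' (s + Δ)| ∂volume ∂volume := by
    apply lintegral_lintegral_swap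
    apply Measurable.aemeasurable
    refine Measurable.mul (f := fun p : ℝ × ℝ => ENNReal.ofReal |K' p.2|)
      (g := fun p : ℝ × ℝ => ENNReal.ofReal |K' (p.2 + p.1)|) ?_ ?_
    · exact (ENNReal.measurable_ofReal.comp ((hK'meas.comp measurable_snd).abs))
    · exact (ENNReal.measurable_ofReal.comp ((hK'meas.comp (measurable_snd.add measurable_fst)).abs))
  have hinner : ∀ s ∈ Ioi (0:ℝ), ∫⁻ Δ in Ioi (0:ℝ),
        ENNReal.ofReal |K' s| * ENNReal.ofReal |K' (s + Δ)| ∂volume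
      ≤ ENNReal.ofReal |K' s| * L1 := by
    intro s hs
    have hs0 : (0:ℝ) < s := hs
    rw [lintegral_const_mul' _ _ ENNReal.ofReal_ne_top]
    refine mul_le_mul_right ?_ _
    have : ∫⁻ Δ in Ioi (0:ℝ), ENNReal.ofReal |K' (s + Δ)| ∂volume
        = ∫⁻ x in Ioi ((0:ℝ) + s), ENNReal.ofReal |K' x| ∂volume := by
      have hcomm : ∀ Δ : ℝ, ENNReal.ofReal |K' (s + Δ)| = ENNReal.ofReal |K' (Δ + s)| := by
        intro Δ; rw [add_comm]
      simp_rw [hcomm]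
      exact shift_lintegral (fun x => ENNReal.ofReal |K' x|) 0 s
    rw [this, hL1def]
    exact lintegral_mono_set (Ioi_subset_Ioi (by linarith))
  calc ∫⁻ Δ in Ioi (0:ℝ), ENNReal.ofReal |C * ∫ s in Ioi (0:ℝ), K s * K (s + Δ)|
      ≤ ∫⁻ Δ in Ioi (0:ℝ), ENNReal.ofReal |C| *
          ∫⁻ s in Ioi (0:ℝ), ENNReal.ofReal |K' s| * ENNReal.ofReal |K' (s + Δ)| ∂volume :=
        lintegral_mono_ae ((ae_restrict_iff' measurableSet_Ioi).2 (ae_of_all _ key))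
    _ = ENNReal.ofReal |C| * ∫⁻ Δ in Ioi (0:ℝ), ∫⁻ s in Ioi (0:ℝ),
          ENNReal.ofReal |K' s| * ENNReal.ofReal |K' (s + Δ)| ∂volume ∂volume :=
        lintegral_const_mul' _ _ ENNReal.ofReal_ne_top
    _ = ENNReal.ofReal |C| * ∫⁻ s in Ioi (0:ℝ), ∫⁻ Δ in Ioi (0:ℝ),
          ENNReal.ofReal |K' s| * ENNReal.ofReal |K' (s + Δ)| ∂volume ∂volume := by rw [hswap2]
    _ ≤ ENNReal.ofReal |C| * ∫⁻ s in Ioi (0:ℝ), ENNReal.ofReal |K' s| * L1 ∂volume :=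
        mul_le_mul_right (lintegral_mono_ae
          ((ae_restrict_iff' measurableSet_Ioi).2 (ae_of_all _ hinner))) _
    _ = ENNReal.ofReal |C| * (L1 * L1) := by
        rw [lintegral_mul_const' _ _ (ne_of_lt hL1)]
    _ < ⊤ := by
        refine ENNReal.mul_lt_top ENNReal.ofReal_lt_top (ENNReal.mul_lt_top hL1 hL1)
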